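/- Let k be a field of prime characteristic p, let n be an integer with n > 1 that is not divisible by p, define φ(e) := n·p^e − dim_k (k[X,Y]/(X^{p^e}, Y^{p^e}, X^n − Y^n)) for each nonnegative integer e, let ω be the multiplicative order of p modulo n, and let π be the minimal positive period of φ. Then 2·π = ω if and only if ω is even and p^{ω/2} ≡ −1 (mod n). -/

import Mathlib

open MvPolynomial

namespace Stmt4Aux

noncomputable section

variable (k : Type*) [Field k]

/-- the polynomial Polynomial.X^n - Y^n viewed in (k[Y])[Polynomial.X] -/
def fpoly (n : ℕ) : Polynomial (Polynomial k) := Polynomial.X ^ n - Polynomial.C (Polynomial.X ^ n)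

lemma fpoly_monic (n : ℕ) (hn : 0 < n) : (fpoly k n).Monic :=
  Polynomial.monic_X_pow_sub_C _ hn.ne'

/-- power basis of AdjoinRoot (fpoly k n) over k[Y], reindexed by Fin n -/
def bb (n : ℕ) (hn : 0 < n) :
    Module.Basis (Fin n) (Polynomial k) (AdjoinRoot (fpoly k n)) :=
  (AdjoinRoot.powerBasis' (fpoly_monic k n hn)).basis.reindex
    (finCongr (by rw [AdjoinRoot.powerBasis'_dim, fpoly, Polynomial.natDegree_X_pow_sub_C]))

lemma bb_apply (n : ℕ) (hn : 0 < n) (m : Fin n) :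
    bb k n hn m = AdjoinRoot.root (fpoly k n) ^ (m : ℕ) := by
  rw [bb, Module.Basis.reindex_apply, PowerBasis.basis_eq_pow, AdjoinRoot.powerBasis'_gen]
  rfl

lemma root_pow_n (n : ℕ) :
    AdjoinRoot.root (fpoly k n) ^ n =
      algebraMap (Polynomial k) (AdjoinRoot (fpoly k n)) (Polynomial.X ^ n) := by
  have h : AdjoinRoot.mk (fpoly k n) (Polynomial.X ^ n - Polynomial.C (Polynomial.X ^ n)) = 0 := by
    rw [← fpoly]; exact AdjoinRoot.mk_self
  rw [map_sub, sub_eq_zero] at h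
  rw [← AdjoinRoot.mk_X (f := fpoly k n), ← map_pow, h, AdjoinRoot.mk_C,
    AdjoinRoot.algebraMap_eq]

lemma repr_root_pow_lt (n : ℕ) (hn : 0 < n) {s : ℕ} (hs : s < n) :
    (bb k n hn).repr (AdjoinRoot.root (fpoly k n) ^ s) =
      Finsupp.single ⟨s, hs⟩ 1 := by
  rw [← bb_apply k n hn ⟨s, hs⟩, Module.Basis.repr_self]

lemma repr_root_pow_ge (n : ℕ) (hn : 0 < n) {s : ℕ} (hs1 : n ≤ s) (hs2 : s - n < n) :
    (bb k n hn).repr (AdjoinRoot.root (fpoly k n) ^ s) =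
      Finsupp.single ⟨s - n, hs2⟩ ((Polynomial.X : Polynomial k) ^ n) := by
  have : AdjoinRoot.root (fpoly k n) ^ s
      = ((Polynomial.X : Polynomial k) ^ n) • AdjoinRoot.root (fpoly k n) ^ (s - n) := by
    rw [Algebra.smul_def, ← root_pow_n, ← pow_add]
    congr 1
    omega
  rw [this, map_smul, repr_root_pow_lt k n hn hs2, Finsupp.smul_single, smul_eq_mul, mul_one]

/-- exponent bounds for the component basis -/
def dd (n q : ℕ) (m : Fin n) : ℕ := if (m : ℕ) < q % n then q else n * (q / n)

lemma dd_le (n q : ℕ) (m : Fin n) : dd n q m ≤ q := by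
  unfold dd; split
  · exact le_rfl
  · exact Nat.mul_div_le q n |>.trans_eq' (by rw [Nat.mul_comm]) |>.trans le_rfl

/-- the evaluation algebra hom MvPolynomial (Fin 2) k → AdjoinRoot (fpoly k n) -/
def Phi (n : ℕ) : MvPolynomial (Fin 2) k →ₐ[k] AdjoinRoot (fpoly k n) :=
  MvPolynomial.aeval
    ![AdjoinRoot.root (fpoly k n),
      algebraMap (Polynomial k) (AdjoinRoot (fpoly k n)) Polynomial.X]

lemma Phi_X0 (n : ℕ) : Phi k n (MvPolynomial.X 0) = AdjoinRoot.root (fpoly k n) := by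
  simp [Phi]

lemma Phi_X1 (n : ℕ) :
    Phi k n (MvPolynomial.X 1) =
      algebraMap (Polynomial k) (AdjoinRoot (fpoly k n)) Polynomial.X := by
  simp [Phi]

/-- the detecting linear map -/
def T (n q : ℕ) (hn : 0 < n) :
    MvPolynomial (Fin 2) k →ₗ[k]
      ∀ m : Fin n, AdjoinRoot ((Polynomial.X : Polynomial k) ^ dd n q m) :=
  (LinearMap.pi fun m =>
      (Polynomial.aeval (AdjoinRoot.root ((Polynomial.X : Polynomial k) ^ dd n q m))).toLinearMap
        ∘ₗ (Finsupp.lapply m : (Fin n →₀ Polynomial k) →ₗ[k] Polynomial k))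
    ∘ₗ (((bb k n hn).repr.restrictScalars k).toLinearMap
    ∘ₗ (Phi k n).toLinearMap)

lemma T_apply (n q : ℕ) (hn : 0 < n) (g : MvPolynomial (Fin 2) k) (m : Fin n) :
    T k n q hn g m =
      Polynomial.aeval (AdjoinRoot.root ((Polynomial.X : Polynomial k) ^ dd n q m))
        ((bb k n hn).repr (Phi k n g) m) := rfl

lemma rootW_pow_zero (n q : ℕ) (m : Fin n) {s : ℕ} (hs : dd n q m ≤ s) :
    AdjoinRoot.root ((Polynomial.X : Polynomial k) ^ dd n q m) ^ s = 0 := by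
  have h0 : AdjoinRoot.root ((Polynomial.X : Polynomial k) ^ dd n q m) ^ dd n q m = 0 := by
    have := AdjoinRoot.mk_self (f := (Polynomial.X : Polynomial k) ^ dd n q m)
    rwa [map_pow, AdjoinRoot.mk_X] at this
  rw [← Nat.sub_add_cancel hs, pow_add, h0, mul_zero]

/-- any Y^s with s ≥ dd is killed after aeval into the component ring -/
lemma aeval_X_pow_mul (n q : ℕ) (m : Fin n) {s : ℕ} (hs : dd n q m ≤ s)
    (c : Polynomial k) :
    Polynomial.aeval (AdjoinRoot.root ((Polynomial.X : Polynomial k) ^ dd n q m))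
      ((Polynomial.X : Polynomial k) ^ s * c) = 0 := by
  rw [map_mul, map_pow, Polynomial.aeval_X, rootW_pow_zero k n q m hs, zero_mul]


/-- core divisibility: multiplying by root^r pushes everything below r into Y^n -/
lemma repr_mul_root_pow_dvd (n : ℕ) (hn : 0 < n) (r : ℕ) (hr : r < n)
    (c : AdjoinRoot (fpoly k n)) (m : Fin n) (hm : (m : ℕ) < r) :
    ((Polynomial.X : Polynomial k) ^ n) ∣
      (bb k n hn).repr (c * AdjoinRoot.root (fpoly k n) ^ r) m := by
  set b := bb k n hn
  have hc : c = ∑ j : Fin n, b.repr c j • b j := (b.sum_repr c).symm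
  rw [hc, Finset.sum_mul, map_sum, Finsupp.finset_sum_apply]
  apply Finset.dvd_sum
  intro j _
  rw [smul_mul_assoc, map_smul, bb_apply, ← pow_add, Finsupp.smul_apply, smul_eq_mul]
  apply Dvd.dvd.mul_left
  by_cases hj : (j : ℕ) + r < n
  · rw [repr_root_pow_lt k n hn hj, Finsupp.single_apply]
    have : (⟨(j:ℕ)+r, hj⟩ : Fin n) ≠ m := by
      intro h
      apply absurd (congrArg Fin.val h)
      simp only []
      omega
    rw [if_neg this]
    exact dvd_zero _
  · have h1 : n ≤ (j : ℕ) + r := by omega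
    have h2 : (j : ℕ) + r - n < n := by omega
    rw [repr_root_pow_ge k n hn h1 h2, Finsupp.single_apply]
    split
    · exact dvd_rfl
    · exact dvd_zero _

/-- T kills multiples of X1^q -/
lemma T_mul_X1 (n q : ℕ) (hn : 0 < n) (h : MvPolynomial (Fin 2) k) :
    T k n q hn (h * MvPolynomial.X 1 ^ q) = 0 := by
  funext m
  rw [T_apply, Pi.zero_apply]
  have : Phi k n (h * MvPolynomial.X 1 ^ q)
      = ((Polynomial.X : Polynomial k) ^ q) • Phi k n h := by
    rw [map_mul, map_pow, Phi_X1, ← map_pow, Algebra.smul_def, mul_comm]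
  rw [this, map_smul, Finsupp.smul_apply, smul_eq_mul]
  exact aeval_X_pow_mul k n q m (dd_le n q m) _

/-- T kills multiples of X0^q -/
lemma T_mul_X0 (n q : ℕ) (hn : 0 < n) (h : MvPolynomial (Fin 2) k) :
    T k n q hn (h * MvPolynomial.X 0 ^ q) = 0 := by
  funext m
  rw [T_apply, Pi.zero_apply]
  have hq : q = n * (q / n) + q % n := (Nat.div_add_mod q n).symm
  have hroot : AdjoinRoot.root (fpoly k n) ^ q
      = ((Polynomial.X : Polynomial k) ^ (n * (q / n))) • AdjoinRoot.root (fpoly k n) ^ (q % n) := by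
    have hx : AdjoinRoot.root (fpoly k n) ^ (n * (q / n))
        = algebraMap (Polynomial k) (AdjoinRoot (fpoly k n)) (Polynomial.X ^ (n * (q / n))) := by
      rw [pow_mul, root_pow_n, ← map_pow, ← pow_mul]
    rw [Algebra.smul_def, ← hx, ← pow_add, ← hq]
  have : Phi k n (h * MvPolynomial.X 0 ^ q)
      = ((Polynomial.X : Polynomial k) ^ (n * (q / n))) •
          (Phi k n h * AdjoinRoot.root (fpoly k n) ^ (q % n)) := by
    rw [map_mul, map_pow, Phi_X0, hroot, mul_smul_comm]
  rw [this, map_smul, Finsupp.smul_apply, smul_eq_mul]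
  by_cases hm : (m : ℕ) < q % n
  · -- dd = q here; use core divisibility
    obtain ⟨c, hc⟩ := repr_mul_root_pow_dvd k n hn (q % n) (Nat.mod_lt q hn)
      (Phi k n h) m hm
    rw [hc, ← mul_assoc, ← pow_add]
    refine aeval_X_pow_mul k n q m ?_ _
    have h1 := Nat.div_add_mod q n
    have h2 := Nat.mod_lt q hn
    rw [dd, if_pos hm]
    omega
  · exact aeval_X_pow_mul k n q m (by rw [dd, if_neg hm]) _

/-- T kills multiples of X0^n - X1^n -/
lemma T_mul_rel (n q : ℕ) (hn : 0 < n) (h : MvPolynomial (Fin 2) k) :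
    T k n q hn (h * (MvPolynomial.X 0 ^ n - MvPolynomial.X 1 ^ n)) = 0 := by
  have : Phi k n (h * (MvPolynomial.X 0 ^ n - MvPolynomial.X 1 ^ n)) = 0 := by
    rw [map_mul, map_sub, map_pow, map_pow, Phi_X0, Phi_X1, ← map_pow, root_pow_n,
      sub_self, mul_zero]
  funext m
  rw [T_apply, this, map_zero, Finsupp.zero_apply, map_zero, Pi.zero_apply]

/-- T kills the whole ideal -/
lemma T_ideal (n q : ℕ) (hn : 0 < n) (z : MvPolynomial (Fin 2) k)
    (hz : z ∈ Ideal.span {MvPolynomial.X 0 ^ q, MvPolynomial.X 1 ^ q,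
      (MvPolynomial.X 0 : MvPolynomial (Fin 2) k) ^ n - MvPolynomial.X 1 ^ n}) :
    T k n q hn z = 0 := by
  rw [show ({MvPolynomial.X 0 ^ q, MvPolynomial.X 1 ^ q,
      (MvPolynomial.X 0 : MvPolynomial (Fin 2) k) ^ n - MvPolynomial.X 1 ^ n} :
        Set (MvPolynomial (Fin 2) k))
    = insert (MvPolynomial.X 0 ^ q) (insert (MvPolynomial.X 1 ^ q)
        {(MvPolynomial.X 0 : MvPolynomial (Fin 2) k) ^ n - MvPolynomial.X 1 ^ n}) from rfl,
    Ideal.mem_span_insert] at hz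
  obtain ⟨a, z1, hz1, rfl⟩ := hz
  rw [Ideal.mem_span_insert] at hz1
  obtain ⟨b, z2, hz2, rfl⟩ := hz1
  rw [Ideal.mem_span_singleton] at hz2
  obtain ⟨c, rfl⟩ := hz2
  rw [map_add, map_add,
    mul_comm ((MvPolynomial.X 0 : MvPolynomial (Fin 2) k) ^ n - MvPolynomial.X 1 ^ n) c,
    T_mul_X0 k n q hn a, T_mul_X1 k n q hn b, T_mul_rel k n q hn c]
  simp

/-- component power basis -/
def wb (n q : ℕ) (m : Fin n) :
    Module.Basis (Fin (dd n q m)) k (AdjoinRoot ((Polynomial.X : Polynomial k) ^ dd n q m)) :=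
  (AdjoinRoot.powerBasis' (Polynomial.monic_X_pow _)).basis.reindex
    (finCongr (by rw [AdjoinRoot.powerBasis'_dim, Polynomial.natDegree_X_pow]))

lemma wb_apply (n q : ℕ) (m : Fin n) (i : Fin (dd n q m)) :
    wb k n q m i = AdjoinRoot.root ((Polynomial.X : Polynomial k) ^ dd n q m) ^ (i : ℕ) := by
  rw [wb, Module.Basis.reindex_apply, PowerBasis.basis_eq_pow, AdjoinRoot.powerBasis'_gen]
  rfl

lemma T_monomial (n q : ℕ) (hn : 0 < n) (m : Fin n) (i : ℕ) :
    T k n q hn (MvPolynomial.X 0 ^ (m : ℕ) * MvPolynomial.X 1 ^ i)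
      = Pi.single m (AdjoinRoot.root ((Polynomial.X : Polynomial k) ^ dd n q m) ^ i) := by
  funext m'
  rw [T_apply]
  have hPhi : Phi k n (MvPolynomial.X 0 ^ (m : ℕ) * MvPolynomial.X 1 ^ i)
      = ((Polynomial.X : Polynomial k) ^ i) • (bb k n hn m) := by
    rw [map_mul, map_pow, map_pow, Phi_X0, Phi_X1, ← map_pow, bb_apply,
      Algebra.smul_def, mul_comm]
  rw [hPhi, map_smul, Module.Basis.repr_self, Finsupp.smul_single, smul_eq_mul, mul_one,
    Finsupp.single_apply]
  by_cases h : m = m'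
  · subst h
    rw [if_pos rfl, Pi.single_eq_same, map_pow, Polynomial.aeval_X]
  · rw [if_neg h, Pi.single_eq_of_ne (Ne.symm h), map_zero]

/-- the ideal -/
def idl (n q : ℕ) : Ideal (MvPolynomial (Fin 2) k) :=
  Ideal.span {MvPolynomial.X 0 ^ q, MvPolynomial.X 1 ^ q,
    (MvPolynomial.X 0 : MvPolynomial (Fin 2) k) ^ n - MvPolynomial.X 1 ^ n}

/-- the candidate basis family of the quotient -/
def kappa (n q : ℕ) : ((m : Fin n) × Fin (dd n q m)) →
    (MvPolynomial (Fin 2) k ⧸ idl k n q) := fun j =>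
  Ideal.Quotient.mkₐ k (idl k n q)
    (MvPolynomial.X 0 ^ (j.1 : ℕ) * MvPolynomial.X 1 ^ (j.2 : ℕ))

lemma T_kappa (n q : ℕ) (hn : 0 < n) (j : (m : Fin n) × Fin (dd n q m)) :
    T k n q hn (MvPolynomial.X 0 ^ (j.1 : ℕ) * MvPolynomial.X 1 ^ (j.2 : ℕ))
      = Pi.basis (wb k n q) j := by
  obtain ⟨m, i⟩ := j
  rw [T_monomial k n q hn m (i : ℕ), Pi.basis_apply, wb_apply]

lemma kappa_li (n q : ℕ) (hn : 0 < n) : LinearIndependent k (kappa k n q) := by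
  rw [linearIndependent_iff']
  intro s g hsum i hi
  have hmk : (Ideal.Quotient.mkₐ k (idl k n q))
      (∑ j ∈ s, g j • (MvPolynomial.X 0 ^ (j.1 : ℕ) * MvPolynomial.X 1 ^ (j.2 : ℕ))) = 0 := by
    rw [map_sum]
    simp only [map_smul]
    exact hsum
  have hz : (∑ j ∈ s, g j • (MvPolynomial.X 0 ^ (j.1 : ℕ) * MvPolynomial.X 1 ^ (j.2 : ℕ)))
      ∈ idl k n q := by
    rw [← Ideal.Quotient.eq_zero_iff_mem]
    rw [← Ideal.Quotient.mkₐ_eq_mk k]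
    exact hmk
  have hT := T_ideal k n q hn _ hz
  rw [map_sum] at hT
  simp only [map_smul, T_kappa k n q hn] at hT
  exact linearIndependent_iff'.mp (Pi.basis (wb k n q)).linearIndependent s g hT i hi

lemma gen1_mem (n q : ℕ) : (MvPolynomial.X 0 : MvPolynomial (Fin 2) k) ^ q ∈ idl k n q :=
  Ideal.subset_span (by simp)

lemma gen2_mem (n q : ℕ) : (MvPolynomial.X 1 : MvPolynomial (Fin 2) k) ^ q ∈ idl k n q :=
  Ideal.subset_span (by simp)

lemma gen3_mem (n q : ℕ) :
    (MvPolynomial.X 0 : MvPolynomial (Fin 2) k) ^ n - MvPolynomial.X 1 ^ n ∈ idl k n q :=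
  Ideal.subset_span (by simp)

lemma mk_mono_mem (n q : ℕ) (hn : 0 < n) : ∀ a b : ℕ,
    Ideal.Quotient.mkₐ k (idl k n q) (MvPolynomial.X 0 ^ a * MvPolynomial.X 1 ^ b)
      ∈ Submodule.span k (Set.range (kappa k n q)) := by
  intro a
  induction a using Nat.strong_induction_on with
  | _ a ih =>
  intro b
  by_cases hb : q ≤ b
  · -- multiple of X1^q, hence zero
    have hmem : (MvPolynomial.X 0 : MvPolynomial (Fin 2) k) ^ a * MvPolynomial.X 1 ^ b
        ∈ idl k n q := by
      have : (MvPolynomial.X 0 : MvPolynomial (Fin 2) k) ^ a * MvPolynomial.X 1 ^ b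
          = (MvPolynomial.X 0 ^ a * MvPolynomial.X 1 ^ (b - q)) * MvPolynomial.X 1 ^ q := by
        rw [mul_assoc, ← pow_add]
        congr 2
        omega
      rw [this]
      exact Ideal.mul_mem_left _ _ (gen2_mem k n q)
    have : Ideal.Quotient.mkₐ k (idl k n q)
        (MvPolynomial.X 0 ^ a * MvPolynomial.X 1 ^ b) = 0 := by
      rw [Ideal.Quotient.mkₐ_eq_mk, Ideal.Quotient.eq_zero_iff_mem]
      exact hmem
    rw [this]
    exact Submodule.zero_mem _
  · by_cases ha : n ≤ a
    · -- rewrite X0^a X1^b = X0^(a-n) X1^(b+n) mod ideal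
      have heq : Ideal.Quotient.mkₐ k (idl k n q)
          (MvPolynomial.X 0 ^ a * MvPolynomial.X 1 ^ b)
          = Ideal.Quotient.mkₐ k (idl k n q)
            (MvPolynomial.X 0 ^ (a - n) * MvPolynomial.X 1 ^ (b + n)) := by
        rw [Ideal.Quotient.mkₐ_eq_mk, Ideal.Quotient.eq]
        have hd : (MvPolynomial.X 0 : MvPolynomial (Fin 2) k) ^ a * MvPolynomial.X 1 ^ b
            - MvPolynomial.X 0 ^ (a - n) * MvPolynomial.X 1 ^ (b + n)
            = (MvPolynomial.X 0 ^ (a - n) * MvPolynomial.X 1 ^ b) *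
              (MvPolynomial.X 0 ^ n - MvPolynomial.X 1 ^ n) := by
          have h1 : a = (a - n) + n := by omega
          rw [h1]
          ring_nf
          rw [show (a - n) + n - n = a - n by omega]
          ring
        rw [hd]
        exact Ideal.mul_mem_left _ _ (gen3_mem k n q)
      rw [heq]
      exact ih (a - n) (by omega) (b + n)
    · by_cases hcase : q % n ≤ a ∧ n * (q / n) ≤ b
      · -- the monomial is zero mod the ideal
        obtain ⟨har, hbn⟩ := hcase
        have hq := Nat.div_add_mod q n
        have hmem : (MvPolynomial.X 0 : MvPolynomial (Fin 2) k) ^ a * MvPolynomial.X 1 ^ b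
            ∈ idl k n q := by
          obtain ⟨c, hc⟩ := sub_dvd_pow_sub_pow
            ((MvPolynomial.X 0 : MvPolynomial (Fin 2) k) ^ n) (MvPolynomial.X 1 ^ n) (q / n)
          have key0 : ((MvPolynomial.X 0 : MvPolynomial (Fin 2) k) ^ n) ^ (q / n)
              = MvPolynomial.X 0 ^ (n * (q / n)) := (pow_mul _ _ _).symm
          have key1 : ((MvPolynomial.X 1 : MvPolynomial (Fin 2) k) ^ n) ^ (q / n)
              = MvPolynomial.X 1 ^ (n * (q / n)) := (pow_mul _ _ _).symm
          have e1 : (MvPolynomial.X 0 : MvPolynomial (Fin 2) k) ^ a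
              = MvPolynomial.X 0 ^ (a - q % n) * MvPolynomial.X 0 ^ (q % n) := by
            rw [← pow_add, Nat.sub_add_cancel har]
          have e2 : (MvPolynomial.X 1 : MvPolynomial (Fin 2) k) ^ b
              = MvPolynomial.X 1 ^ (b - n * (q / n)) * MvPolynomial.X 1 ^ (n * (q / n)) := by
            rw [← pow_add, Nat.sub_add_cancel hbn]
          have e3 : (MvPolynomial.X 0 : MvPolynomial (Fin 2) k) ^ q
              = MvPolynomial.X 0 ^ (n * (q / n)) * MvPolynomial.X 0 ^ (q % n) := by
            rw [← pow_add, hq]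
          have hsplit : (MvPolynomial.X 0 : MvPolynomial (Fin 2) k) ^ a * MvPolynomial.X 1 ^ b
              = (MvPolynomial.X 0 ^ (a - q % n) * MvPolynomial.X 1 ^ (b - n * (q / n)))
                  * MvPolynomial.X 0 ^ q
                - (MvPolynomial.X 0 ^ a * MvPolynomial.X 1 ^ (b - n * (q / n)))
                  * ((MvPolynomial.X 0 ^ n) ^ (q / n) - (MvPolynomial.X 1 ^ n) ^ (q / n)) := by
            rw [key0, key1, e3, e1, e2]
            ring
          rw [hsplit]
          refine Submodule.sub_mem _ (Ideal.mul_mem_left _ _ (gen1_mem k n q)) ?_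
          rw [hc]
          rw [show (MvPolynomial.X 0 ^ a * MvPolynomial.X 1 ^ (b - n * (q / n)))
              * (((MvPolynomial.X 0 : MvPolynomial (Fin 2) k) ^ n - MvPolynomial.X 1 ^ n) * c)
            = ((MvPolynomial.X 0 ^ a * MvPolynomial.X 1 ^ (b - n * (q / n))) * c)
              * ((MvPolynomial.X 0 : MvPolynomial (Fin 2) k) ^ n - MvPolynomial.X 1 ^ n)
            from by ring]
          exact Ideal.mul_mem_left _ _ (gen3_mem k n q)
        have : Ideal.Quotient.mkₐ k (idl k n q)
            (MvPolynomial.X 0 ^ a * MvPolynomial.X 1 ^ b) = 0 := by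
          rw [Ideal.Quotient.mkₐ_eq_mk, Ideal.Quotient.eq_zero_iff_mem]
          exact hmem
        rw [this]
        exact Submodule.zero_mem _
      · -- genuine basis element
        push_neg at ha hb
        have hfin : a < n := ha
        have hbd : b < dd n q ⟨a, hfin⟩ := by
          have hdd : dd n q ⟨a, hfin⟩ = if a < q % n then q else n * (q / n) := rfl
          rw [hdd]
          rcases Nat.lt_or_ge a (q % n) with h | h
          · rw [if_pos h]; omega
          · rw [if_neg (by omega)]
            have hnb : ¬ (n * (q / n) ≤ b) := fun hh => hcase ⟨h, hh⟩
            omega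
        exact Submodule.subset_span ⟨⟨⟨a, hfin⟩, ⟨b, hbd⟩⟩, rfl⟩

lemma kappa_span (n q : ℕ) (hn : 0 < n) :
    ⊤ ≤ Submodule.span k (Set.range (kappa k n q)) := by
  intro z _
  obtain ⟨p, rfl⟩ := Ideal.Quotient.mkₐ_surjective k (idl k n q) z
  rw [← MvPolynomial.support_sum_monomial_coeff p, map_sum]
  refine Submodule.sum_mem _ fun v _ => ?_
  have hmono : (MvPolynomial.monomial v) (MvPolynomial.coeff v p)
      = (MvPolynomial.coeff v p) •
        (MvPolynomial.X 0 ^ (v 0) * MvPolynomial.X 1 ^ (v 1) : MvPolynomial (Fin 2) k) := by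
    rw [MvPolynomial.monomial_eq, MvPolynomial.smul_eq_C_mul]
    congr 1
    rw [Finsupp.prod_fintype _ _ (fun i => pow_zero _)]
    exact Fin.prod_univ_two _
  rw [hmono, map_smul]
  exact Submodule.smul_mem _ _ (mk_mono_mem k n q hn (v 0) (v 1))

theorem finrank_eq (n q : ℕ) (hn : 0 < n) :
    Module.finrank k (MvPolynomial (Fin 2) k ⧸ idl k n q)
      = q % n * q + (n - q % n) * (n * (q / n)) := by
  have bas : Module.Basis ((m : Fin n) × Fin (dd n q m)) k (MvPolynomial (Fin 2) k ⧸ idl k n q) :=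
    Module.Basis.mk (kappa_li k n q hn) (kappa_span k n q hn)
  rw [Module.finrank_eq_card_basis bas, Fintype.card_sigma]
  simp only [Fintype.card_fin]
  have hstep : ∑ m : Fin n, dd n q m
      = ∑ i ∈ Finset.range n, (if i < q % n then q else n * (q / n)) :=
    Fin.sum_univ_eq_sum_range (fun i => if i < q % n then q else n * (q / n)) n
  rw [hstep]
  have hrn : q % n ≤ n := le_of_lt (Nat.mod_lt q hn)
  rw [Finset.range_eq_Ico, ← Finset.sum_Ico_consecutive _ (Nat.zero_le (q % n)) hrn]
  have h1 : ∑ i ∈ Finset.Ico 0 (q % n), (if i < q % n then q else n * (q / n))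
      = q % n * q := by
    rw [Finset.sum_congr rfl (fun i hi => if_pos (Finset.mem_Ico.mp hi).2)]
    rw [Finset.sum_const, Nat.card_Ico, smul_eq_mul, Nat.sub_zero]
  have h2 : ∑ i ∈ Finset.Ico (q % n) n, (if i < q % n then q else n * (q / n))
      = (n - q % n) * (n * (q / n)) := by
    rw [Finset.sum_congr rfl
      (fun i hi => if_neg (not_lt.mpr (Finset.mem_Ico.mp hi).1))]
    rw [Finset.sum_const, Nat.card_Ico, smul_eq_mul]
  rw [h1, h2]

/-- the dimension formula, integer form -/
theorem phi_formula (n q : ℕ) (hn : 0 < n) :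
    (n : ℤ) * (q : ℤ) -
      (Module.finrank k (MvPolynomial (Fin 2) k ⧸ idl k n q) : ℤ)
      = (q % n : ℕ) * ((n : ℤ) - (q % n : ℕ)) := by
  rw [finrank_eq k n q hn]
  have h2 : q % n < n := Nat.mod_lt q hn
  have h1 : n * (q / n) + q % n = q := Nat.div_add_mod q n
  have hq : (q : ℤ) = (n : ℤ) * ((q / n : ℕ) : ℤ) + ((q % n : ℕ) : ℤ) := by
    exact_mod_cast h1.symm
  have hcast : ((n - q % n : ℕ) : ℤ) = (n : ℤ) - ((q % n : ℕ) : ℤ) :=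
    Nat.cast_sub (le_of_lt h2)
  rw [Nat.cast_add, Nat.cast_mul, Nat.cast_mul, hcast, Nat.cast_mul, hq]
  ring

/-- restated with the literal span -/
theorem phi_formula' (n q : ℕ) (hn : 0 < n) :
    (n : ℤ) * (q : ℤ) - (Module.finrank k (MvPolynomial (Fin 2) k ⧸
      Ideal.span {(MvPolynomial.X 0 : MvPolynomial (Fin 2) k) ^ q, MvPolynomial.X 1 ^ q,
        (MvPolynomial.X 0 : MvPolynomial (Fin 2) k) ^ n - MvPolynomial.X 1 ^ n}) : ℤ)
      = ((q % n : ℕ) : ℤ) * ((n : ℤ) - ((q % n : ℕ) : ℤ)) := phi_formula k n q hn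

end
end Stmt4Aux

section NumberTheory

variable (p n : ℕ)

lemma Stmt4Aux.r_pos (hp : p.Prime) (hn : 1 < n) (hpn : ¬ p ∣ n) (e : ℕ) :
    0 < p ^ e % n ∧ p ^ e % n < n := by
  have hco : Nat.Coprime (p ^ e) n := ((hp.coprime_iff_not_dvd).mpr hpn).pow_left e
  constructor
  · rcases Nat.eq_zero_or_pos (p ^ e % n) with h | h
    · exfalso
      have hdvd : n ∣ p ^ e := Nat.dvd_of_mod_eq_zero h
      have := Nat.Coprime.eq_one_of_dvd hco.symm hdvd
      omega
    · exact h
  · exact Nat.mod_lt _ (by omega)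

end NumberTheory

/-- Theorem 1(3): with `φ`, `ω`, and the minimal positive period `π` as in Theorem 1(2),
we have `2π = ω` if and only if `ω` is even and `p^{ω/2} ≡ -1 (mod n)`. -/
theorem stmt4 {k : Type*} [Field k] (p : ℕ) (hp : p.Prime) [CharP k p]
    (n : ℕ) (hn : 1 < n) (hpn : ¬ p ∣ n)
    (φ : ℕ → ℤ)
    (hφ : ∀ e : ℕ, φ e = (n : ℤ) * (p : ℤ) ^ e -
      (Module.finrank k (MvPolynomial (Fin 2) k ⧸
        Ideal.span {(X 0 : MvPolynomial (Fin 2) k) ^ p ^ e, X 1 ^ p ^ e,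
          X 0 ^ n - X 1 ^ n}) : ℤ))
    (ω : ℕ) (hω : ω = orderOf ((p : ZMod n)))
    (π : ℕ) (hπ : IsLeast {m : ℕ | 0 < m ∧ ∀ e : ℕ, φ (e + m) = φ e} π) :
    2 * π = ω ↔ (Even ω ∧ (p : ℤ) ^ (ω / 2) ≡ -1 [ZMOD n]) := by
  have hn0 : 0 < n := by omega
  haveI : NeZero n := ⟨by omega⟩
  have hφ' : ∀ e : ℕ, φ e = ((p ^ e % n : ℕ) : ℤ) * ((n : ℤ) - ((p ^ e % n : ℕ) : ℤ)) := by
    intro e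
    have hcastp : ((p : ℤ)) ^ e = ((p ^ e : ℕ) : ℤ) := by push_cast; ring
    rw [hφ e, hcastp, Stmt4Aux.phi_formula' k n (p ^ e) hn0]
  have hcast : ∀ e : ℕ, ((p ^ e % n : ℕ) : ZMod n) = (p : ZMod n) ^ e := by
    intro e; rw [ZMod.natCast_mod, Nat.cast_pow]
  have hr : ∀ e : ℕ, 0 < p ^ e % n ∧ p ^ e % n < n := fun e =>
    Stmt4Aux.r_pos p n hp hn hpn e
  have hunit : IsUnit ((p : ZMod n)) :=
    (ZMod.isUnit_iff_coprime p n).mpr ((hp.coprime_iff_not_dvd).mpr hpn)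
  obtain ⟨u, hu⟩ := hunit
  have hωpos : 0 < ω := by
    rw [hω, ← hu, orderOf_units]
    exact orderOf_pos u
  have hdvd_of_one : ∀ m : ℕ, (p : ZMod n) ^ m = 1 → ω ∣ m := by
    intro m hm; rw [hω]; exact orderOf_dvd_of_pow_eq_one hm
  -- (A) if p^m = ±1 then m is a period of φ
  have hA : ∀ m : ℕ, ((p : ZMod n) ^ m = 1 ∨ (p : ZMod n) ^ m = -1) →
      ∀ e : ℕ, φ (e + m) = φ e := by
    intro m hm e
    rcases hm with hm | hm
    · have hz : ((p ^ (e + m) % n : ℕ) : ZMod n) = ((p ^ e % n : ℕ) : ZMod n) := by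
        rw [hcast, hcast, pow_add, hm, mul_one]
      have h3 : p ^ (e + m) % n % n = p ^ e % n % n :=
        (ZMod.natCast_eq_natCast_iff _ _ _).mp hz
      rw [Nat.mod_eq_of_lt (hr (e + m)).2, Nat.mod_eq_of_lt (hr e).2] at h3
      rw [hφ', hφ', h3]
    · have hsum : ((p ^ (e + m) % n + p ^ e % n : ℕ) : ZMod n) = 0 := by
        rw [Nat.cast_add, hcast, hcast, pow_add, hm, mul_neg_one, neg_add_cancel]
      have hdv : n ∣ p ^ (e + m) % n + p ^ e % n :=
        (ZMod.natCast_eq_zero_iff _ _).mp hsum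
      have h1 := hr (e + m)
      have h2 := hr e
      have hsum' : p ^ (e + m) % n + p ^ e % n = n := by
        have hge : n ≤ p ^ (e + m) % n + p ^ e % n := Nat.le_of_dvd (by omega) hdv
        obtain ⟨c, hc⟩ := hdv
        have hc2 : c < 2 := by
          by_contra hcc
          push_neg at hcc
          have h2n : 2 * n ≤ n * c := by
            calc 2 * n = n * 2 := by ring
            _ ≤ n * c := Nat.mul_le_mul_left n hcc
          omega
        interval_cases c <;> omega
      rw [hφ', hφ']
      have hrepl : ((p ^ (e + m) % n : ℕ) : ℤ) = (n : ℤ) - ((p ^ e % n : ℕ) : ℤ) := by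
        omega
      rw [hrepl]
      ring
  -- (B) if φ m = φ 0 then p^m = ±1
  have hB : ∀ m : ℕ, φ m = φ 0 → ((p : ZMod n) ^ m = 1 ∨ (p : ZMod n) ^ m = -1) := by
    intro m hm
    have h0 : p ^ 0 % n = 1 := by
      rw [pow_zero, Nat.mod_eq_of_lt hn]
    rw [hφ', hφ', h0, Nat.cast_one] at hm
    have h1 := hr m
    have hfact : (((p ^ m % n : ℕ) : ℤ) - 1) * ((n : ℤ) - 1 - ((p ^ m % n : ℕ) : ℤ)) = 0 := by
      linear_combination hm
    rcases mul_eq_zero.mp hfact with h | h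
    · left
      have hone : p ^ m % n = 1 := by omega
      rw [← hcast m, hone, Nat.cast_one]
    · right
      have hone : p ^ m % n = n - 1 := by omega
      rw [← hcast m, hone]
      rw [Nat.cast_sub (by omega), Nat.cast_one, ZMod.natCast_self, zero_sub]
  have hπpos : 0 < π := hπ.1.1
  have hπpm : (p : ZMod n) ^ π = 1 ∨ (p : ZMod n) ^ π = -1 := by
    apply hB
    have := hπ.1.2 0
    rwa [zero_add] at this
  have hZ : ((p : ℤ) ^ (ω / 2) ≡ -1 [ZMOD (n : ℤ)]) ↔ (p : ZMod n) ^ (ω / 2) = -1 := by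
    rw [← ZMod.intCast_eq_intCast_iff]
    push_cast
    rfl
  constructor
  · intro h2π
    rcases hπpm with h1 | h1
    · exfalso
      have hd : ω ∣ π := hdvd_of_one π h1
      have := Nat.le_of_dvd hπpos hd
      omega
    · have heven : Even ω := ⟨π, by omega⟩
      have hhalf : ω / 2 = π := by omega
      refine ⟨heven, ?_⟩
      rw [hZ, hhalf]
      exact h1
  · rintro ⟨heven, hmod⟩
    have hmod' : (p : ZMod n) ^ (ω / 2) = -1 := hZ.mp hmod
    obtain ⟨t, ht⟩ := heven
    have hle : π ≤ ω / 2 := hπ.2 ⟨by omega, hA (ω / 2) (Or.inr hmod')⟩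
    have h2 : (p : ZMod n) ^ (2 * π) = 1 := by
      rcases hπpm with h1 | h1
      · rw [two_mul, pow_add, h1, mul_one]
      · rw [two_mul, pow_add, h1, neg_one_mul, neg_neg]
    have hωle : ω ≤ 2 * π := Nat.le_of_dvd (by omega) (hdvd_of_one _ h2)
    omega
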